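/- Let φ be an LTLf formula over X ∪ Y and ψ = t(φ) ∧ alive ∧ (alive U G¬alive) its translated LTL formula over X ∪ Y ∪ {alive}, where alive is a fresh atom assigned to the agent. Then φ is α-fair realizable with respect to ⟨X, Y⟩ if and only if the LTL formula GFα → ψ is realizable with respect to ⟨X, Y ∪ {alive}⟩. -/

import Mathlib

namespace LTLfSynth

/-! ### Syntax of LTL / LTLf formulas -/

/-- Syntax of LTL / LTLf formulas over atomic propositions `P`
(with the standard abbreviation `true` included as a constant). -/
inductive Formula (P : Type) : Type
  | tt : Formula P
  | atom : P → Formula P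
  | not : Formula P → Formula P
  | and : Formula P → Formula P → Formula P
  | next : Formula P → Formula P
  | until_ : Formula P → Formula P → Formula P

namespace Formula

/-- LTLf satisfaction at position `i` of a finite trace `ρ` (a list of subsets of `P`). -/
def finSatAt {P : Type} (ρ : List (Set P)) : Formula P → ℕ → Prop
  | tt, _ => True
  | atom a, i => a ∈ ρ.getD i ∅
  | not φ, i => ¬ finSatAt ρ φ i
  | and φ ψ, i => finSatAt ρ φ i ∧ finSatAt ρ ψ i
  | next φ, i => i + 1 < ρ.length ∧ finSatAt ρ φ (i + 1)
  | until_ φ ψ, i => ∃ j, i ≤ j ∧ j < ρ.length ∧ finSatAt ρ ψ j ∧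
      ∀ k, i ≤ k → k < j → finSatAt ρ φ k

/-- `ρ ⊨ φ` for a finite trace. -/
def finSat {P : Type} (ρ : List (Set P)) (φ : Formula P) : Prop := finSatAt ρ φ 0

/-- LTL satisfaction at position `i` of an infinite trace `ρ : ℕ → Set P`. -/
def infSatAt {P : Type} (ρ : ℕ → Set P) : Formula P → ℕ → Prop
  | tt, _ => True
  | atom a, i => a ∈ ρ i
  | not φ, i => ¬ infSatAt ρ φ i
  | and φ ψ, i => infSatAt ρ φ i ∧ infSatAt ρ ψ i
  | next φ, i => infSatAt ρ φ (i + 1)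
  | until_ φ ψ, i => ∃ j, i ≤ j ∧ infSatAt ρ ψ j ∧
      ∀ k, i ≤ k → k < j → infSatAt ρ φ k

/-- `ρ ⊨ φ` for an infinite trace. -/
def infSat {P : Type} (ρ : ℕ → Set P) (φ : Formula P) : Prop := infSatAt ρ φ 0

/-- `F φ = true U φ`. -/
def F {P : Type} (φ : Formula P) : Formula P := until_ tt φ

/-- `G φ = ¬ F ¬ φ`. -/
def G {P : Type} (φ : Formula P) : Formula P := not (F (not φ))

/-- `φ ∨ ψ`. -/
def or {P : Type} (φ ψ : Formula P) : Formula P := not (and (not φ) (not ψ))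

/-- `φ → ψ`. -/
def imp {P : Type} (φ ψ : Formula P) : Formula P := or (not φ) ψ

/-- Atom renaming. -/
def map {P Q : Type} (f : P → Q) : Formula P → Formula Q
  | tt => tt
  | atom a => atom (f a)
  | not φ => not (map f φ)
  | and φ ψ => and (map f φ) (map f ψ)
  | next φ => next (map f φ)
  | until_ φ ψ => until_ (map f φ) (map f ψ)

end Formula

/-! ### The LTLf-to-LTL translation with the fresh atom `alive` (modeled as `none`) -/

/-- The fresh atom `alive` over `P ∪ {alive}`, modeled as `Option P` with `alive = none`. -/
def alive {P : Type} : Formula (Option P) := Formula.atom none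

/-- The translation `t` from LTLf over `P` to LTL over `P ∪ {alive}`. -/
def t {P : Type} : Formula P → Formula (Option P)
  | .tt => .tt
  | .atom a => .atom (some a)
  | .not φ => .not (t φ)
  | .and φ ψ => .and (t φ) (t ψ)
  | .next φ => .next (.and alive (t φ))
  | .until_ φ ψ => .until_ (t φ) (.and alive (t ψ))

/-- `ψ = t(φ) ∧ alive ∧ (alive U G ¬alive)`. -/
def transLTL {P : Type} (φ : Formula P) : Formula (Option P) :=
  .and (t φ) (.and alive (.until_ alive (Formula.G (.not alive))))

/-- Extension equivalence `τ ≈ τ'`: `τ'(i) = τ[i] ∪ {alive}` for `i < |τ|` and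
`τ'(i) = ∅` for `i ≥ |τ|`. -/
def extEquiv {P : Type} (τ : List (Set P)) (τ' : ℕ → Set (Option P)) : Prop :=
  (∀ i, i < τ.length → τ' i = insert none (Option.some '' τ.getD i ∅)) ∧
  (∀ i, τ.length ≤ i → τ' i = ∅)

/-! ### Boolean formulas (environment constraints) -/

/-- Boolean (propositional) formulas over variables `V`. -/
inductive BForm (V : Type) : Type
  | tt : BForm V
  | atom : V → BForm V
  | not : BForm V → BForm V
  | and : BForm V → BForm V → BForm V

namespace BForm

/-- `X ⊨ α` for an assignment `X ⊆ V`. -/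
def eval {V : Type} (X : Set V) : BForm V → Prop
  | tt => True
  | atom v => v ∈ X
  | not b => ¬ eval X b
  | and b c => eval X b ∧ eval X c

/-- View a Boolean formula as a temporal formula, relocating the atoms by `emb`. -/
def toFormula {V P : Type} (emb : V → P) : BForm V → Formula P
  | tt => .tt
  | atom v => .atom (emb v)
  | not b => .not (toFormula emb b)
  | and b c => .and (toFormula emb b) (toFormula emb c)

end BForm

/-! ### Traces, strategies and plays over a DFA arena -/

/-- Combine an environment assignment `X ⊆ Vx` with an agent assignment `Y ⊆ Vy` into
an assignment over `X ∪ Y` (modeled as `Vx ⊕ Vy`). -/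
def combine {Vx Vy : Type} (X : Set Vx) (Y : Set Vy) : Set (Vx ⊕ Vy) :=
  {v | Sum.elim (· ∈ X) (· ∈ Y) v}

/-- The history `[a₀, …, a_{j-1}]` of a sequence. -/
def histList {A : Type} (lam : ℕ → A) (j : ℕ) : List A :=
  (List.range j).map lam

/-- A sequence of environment assignments is `α`-fair if `α` holds infinitely often. -/
def fairSeq {Vx : Type} (α : BForm Vx) (lam : ℕ → Set Vx) : Prop :=
  ∀ n, ∃ j, n ≤ j ∧ α.eval (lam j)

/-- A sequence of environment assignments is `α`-stable if `α` holds at all but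
finitely many positions. -/
def stableSeq {Vx : Type} (α : BForm Vx) (lam : ℕ → Set Vx) : Prop :=
  ∃ n, ∀ j, n ≤ j → α.eval (lam j)

/-- The state visited at round `j` of the play from `s` induced by environment sequence
`lam` and agent strategy `g`. -/
def playState {Vx Vy S : Type} (δ : S → Set (Vx ⊕ Vy) → S) (g : List (Set Vx) → Set Vy)
    (s : S) (lam : ℕ → Set Vx) : ℕ → S
  | 0 => s
  | j + 1 => δ (playState δ g s lam j) (combine (lam j) (g (histList lam (j + 1))))

/-- The state visited at round `j` of the play from `s` in which the environment follows
strategy `h` (so `X_j = h (Y₀, …, Y_{j-1})`) and the agent plays the sequence `mu`. -/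
def envPlayState {Vx Vy S : Type} (δ : S → Set (Vx ⊕ Vy) → S) (h : List (Set Vy) → Set Vx)
    (s : S) (mu : ℕ → Set Vy) : ℕ → S
  | 0 => s
  | j + 1 => δ (envPlayState δ h s mu j) (combine (h (histList mu j)) (mu j))

/-- `s` is an agent winning state of the fair DFA game `⟨G, α⟩`. -/
def agentWinsFairFrom {Vx Vy S : Type} (δ : S → Set (Vx ⊕ Vy) → S) (Acc : Set S)
    (α : BForm Vx) (s : S) : Prop :=
  ∃ g : List (Set Vx) → Set Vy, ∀ lam : ℕ → Set Vx,
    ¬ fairSeq α lam ∨ ∃ j, playState δ g s lam j ∈ Acc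

/-- `s` is an agent winning state of the stable DFA game `⟨G, α⟩`. -/
def agentWinsStableFrom {Vx Vy S : Type} (δ : S → Set (Vx ⊕ Vy) → S) (Acc : Set S)
    (α : BForm Vx) (s : S) : Prop :=
  ∃ g : List (Set Vx) → Set Vy, ∀ lam : ℕ → Set Vx,
    ¬ stableSeq α lam ∨ ∃ j, playState δ g s lam j ∈ Acc

/-- `s` is an environment winning state of the fair DFA game `⟨G, α⟩`. -/
def envWinsFairFrom {Vx Vy S : Type} (δ : S → Set (Vx ⊕ Vy) → S) (Acc : Set S)
    (α : BForm Vx) (s : S) : Prop :=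
  ∃ h : List (Set Vy) → Set Vx, ∀ mu : ℕ → Set Vy,
    fairSeq α (fun j => h (histList mu j)) ∧ ∀ j, envPlayState δ h s mu j ∉ Acc

/-- `s` is an environment winning state of the stable DFA game `⟨G, α⟩`. -/
def envWinsStableFrom {Vx Vy S : Type} (δ : S → Set (Vx ⊕ Vy) → S) (Acc : Set S)
    (α : BForm Vx) (s : S) : Prop :=
  ∃ h : List (Set Vy) → Set Vx, ∀ mu : ℕ → Set Vy,
    stableSeq α (fun j => h (histList mu j)) ∧ ∀ j, envPlayState δ h s mu j ∉ Acc

/-! ### The fixpoint computations -/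

section Fixpoints

variable {Vx Vy S : Type} (δ : S → Set (Vx ⊕ Vy) → S) (Acc : Set S) (α : BForm Vx)

/-- `{s | ∃X ∀Y, (X ⊨ α ∧ δ(s, X∪Y) ∈ A ∖ Acc) ∨ δ(s, X∪Y) ∈ B ∖ Acc}`. -/
def envStep (A B : Set S) : Set S :=
  {s | ∃ X : Set Vx, ∀ Y : Set Vy,
    (α.eval X ∧ δ s (combine X Y) ∈ A \ Acc) ∨ δ s (combine X Y) ∈ B \ Acc}

/-- `{s | ∀X ∃Y, (X ⊭ α ∨ δ(s, X∪Y) ∈ A ∪ Acc) ∧ δ(s, X∪Y) ∈ B ∪ Acc}`. -/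
def sysStep (A B : Set S) : Set S :=
  {s | ∀ X : Set Vx, ∃ Y : Set Vy,
    (¬ α.eval X ∨ δ s (combine X Y) ∈ A ∪ Acc) ∧ δ s (combine X Y) ∈ B ∪ Acc}

lemma envStep_mono {A₁ A₂ B₁ B₂ : Set S} (hA : A₁ ⊆ A₂) (hB : B₁ ⊆ B₂) :
    envStep δ Acc α A₁ B₁ ⊆ envStep δ Acc α A₂ B₂ := by
  rintro s ⟨X, hX⟩
  refine ⟨X, fun Y => ?_⟩
  rcases hX Y with ⟨h1, h2, h3⟩ | ⟨h2, h3⟩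
  · exact Or.inl ⟨h1, hA h2, h3⟩
  · exact Or.inr ⟨hB h2, h3⟩

lemma sysStep_mono {A₁ A₂ B₁ B₂ : Set S} (hA : A₁ ⊆ A₂) (hB : B₁ ⊆ B₂) :
    sysStep δ Acc α A₁ B₁ ⊆ sysStep δ Acc α A₂ B₂ := by
  intro s hs X
  obtain ⟨Y, h1, h2⟩ := hs X
  refine ⟨Y, ?_, ?_⟩
  · rcases h1 with h | h | h
    · exact Or.inl h
    · exact Or.inr (Or.inl (hA h))
    · exact Or.inr (Or.inr h)
  · rcases h2 with h | h
    · exact Or.inl (hB h)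
    · exact Or.inr h

/-- Inner fixpoint operator `Ẑ ↦ envStep Z Ẑ` (for `Env_f`). -/
def envFairInner (Z : Set S) : Set S →o Set S :=
  ⟨fun Zh => envStep δ Acc α Z Zh, fun _ _ h => envStep_mono δ Acc α subset_rfl h⟩

/-- Outer operator `Z ↦ μẐ. envStep Z Ẑ` (for `Env_f`). -/
def envFairOuter : Set S →o Set S :=
  ⟨fun Z => OrderHom.lfp (envFairInner δ Acc α Z),
   fun _ _ h => OrderHom.lfp.monotone fun _ => envStep_mono δ Acc α h subset_rfl⟩

/-- `Env_f = νZ. μẐ. {s | ∃X ∀Y, (X ⊨ α ∧ δ(s,X∪Y) ∈ Z∖Acc) ∨ δ(s,X∪Y) ∈ Ẑ∖Acc}`. -/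
def EnvFair : Set S := OrderHom.gfp (envFairOuter δ Acc α)

/-- Inner fixpoint operator `Ẑ ↦ sysStep Z Ẑ` (for `Sys_f`). -/
def sysFairInner (Z : Set S) : Set S →o Set S :=
  ⟨fun Zh => sysStep δ Acc α Z Zh, fun _ _ h => sysStep_mono δ Acc α subset_rfl h⟩

/-- Outer operator `Z ↦ νẐ. sysStep Z Ẑ` (for `Sys_f`). -/
def sysFairOuter : Set S →o Set S :=
  ⟨fun Z => OrderHom.gfp (sysFairInner δ Acc α Z),
   fun _ _ h => OrderHom.gfp.monotone fun _ => sysStep_mono δ Acc α h subset_rfl⟩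

/-- `Sys_f = μZ. νẐ. {s | ∀X ∃Y, (X ⊭ α ∨ δ(s,X∪Y) ∈ Z∪Acc) ∧ δ(s,X∪Y) ∈ Ẑ∪Acc}`. -/
def SysFair : Set S := OrderHom.lfp (sysFairOuter δ Acc α)

/-- Inner fixpoint operator `Ẑ ↦ envStep Ẑ Z` (for `Env_st`). -/
def envStInner (Z : Set S) : Set S →o Set S :=
  ⟨fun Zh => envStep δ Acc α Zh Z, fun _ _ h => envStep_mono δ Acc α h subset_rfl⟩

/-- Outer operator `Z ↦ νẐ. envStep Ẑ Z` (for `Env_st`). -/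
def envStOuter : Set S →o Set S :=
  ⟨fun Z => OrderHom.gfp (envStInner δ Acc α Z),
   fun _ _ h => OrderHom.gfp.monotone fun _ => envStep_mono δ Acc α subset_rfl h⟩

/-- `Env_st = μZ. νẐ. {s | ∃X ∀Y, (X ⊨ α ∧ δ(s,X∪Y) ∈ Ẑ∖Acc) ∨ δ(s,X∪Y) ∈ Z∖Acc}`. -/
def EnvSt : Set S := OrderHom.lfp (envStOuter δ Acc α)

/-- Inner fixpoint operator `Ẑ ↦ sysStep Ẑ Z` (for `Sys_st`). -/
def sysStInner (Z : Set S) : Set S →o Set S :=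
  ⟨fun Zh => sysStep δ Acc α Zh Z, fun _ _ h => sysStep_mono δ Acc α h subset_rfl⟩

/-- Outer operator `Z ↦ μẐ. sysStep Ẑ Z` (for `Sys_st`). -/
def sysStOuter : Set S →o Set S :=
  ⟨fun Z => OrderHom.lfp (sysStInner δ Acc α Z),
   fun _ _ h => OrderHom.lfp.monotone fun _ => sysStep_mono δ Acc α subset_rfl h⟩

/-- `Sys_st = νZ. μẐ. {s | ∀X ∃Y, (X ⊭ α ∨ δ(s,X∪Y) ∈ Ẑ∪Acc) ∧ δ(s,X∪Y) ∈ Z∪Acc}`. -/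
def SysSt : Set S := OrderHom.gfp (sysStOuter δ Acc α)

end Fixpoints

/-! ### Strategy extraction -/

/-- Approximates `Z₀ = ∅`,
`Z_{i+1} = {s | ∀X ∃Y, (X ⊭ α ∨ δ(s,X∪Y) ∈ Z_i ∪ Acc) ∧ δ(s,X∪Y) ∈ Sys_f ∪ Acc}`. -/
def fairApprox {Vx Vy S : Type} (δ : S → Set (Vx ⊕ Vy) → S) (Acc : Set S) (α : BForm Vx) :
    ℕ → Set S
  | 0 => ∅
  | i + 1 => sysStep δ Acc α (fairApprox δ Acc α i) (SysFair δ Acc α)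

/-- One step of the arena under output function `ω`: `δ(s, X ∪ ω(s, X))`. -/
def stepWith {Vx Vy S : Type} (δ : S → Set (Vx ⊕ Vy) → S) (ω : S → Set Vx → Set Vy)
    (s : S) (X : Set Vx) : S :=
  δ s (combine X (ω s X))

/-- The strategy generated by an output function `ω` from `s₀`:
`g(X₀,…,X_j) = ω(t_j, X_j)` where `t₀ = s₀` and `t_{k+1} = δ(t_k, X_k ∪ ω(t_k, X_k))`. -/
def genStrategy {Vx Vy S : Type} (δ : S → Set (Vx ⊕ Vy) → S) (ω : S → Set Vx → Set Vy)
    (s₀ : S) (l : List (Set Vx)) : Set Vy :=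
  ω (l.dropLast.foldl (stepWith δ ω) s₀) (l.getLast?.getD ∅)

/-- Admissibility of an output function for the fair game: for every `i`, every
non-accepting `s ∈ Z_{i+1} ∖ Z_i` and every `X`, the value `Y = ω(s, X)` satisfies
`(X ⊭ α ∨ δ(s,X∪Y) ∈ Z_i ∪ Acc) ∧ δ(s,X∪Y) ∈ Sys_f ∪ Acc`. -/
def AdmissibleFair {Vx Vy S : Type} (δ : S → Set (Vx ⊕ Vy) → S) (Acc : Set S)
    (α : BForm Vx) (ω : S → Set Vx → Set Vy) : Prop :=
  ∀ i : ℕ, ∀ s ∈ fairApprox δ Acc α (i + 1), s ∉ fairApprox δ Acc α i → s ∉ Acc →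
    ∀ X : Set Vx,
      (¬ α.eval X ∨ stepWith δ ω s X ∈ fairApprox δ Acc α i ∪ Acc) ∧
        stepWith δ ω s X ∈ SysFair δ Acc α ∪ Acc

/-- `W = νZ. {s | ∀X ∃Y, (X ⊭ α ∨ δ(s,X∪Y) ∈ Sys_st ∪ Acc) ∧ δ(s,X∪Y) ∈ Z ∪ Acc}`. -/
def Wst {Vx Vy S : Type} (δ : S → Set (Vx ⊕ Vy) → S) (Acc : Set S) (α : BForm Vx) : Set S :=
  OrderHom.gfp (sysFairInner δ Acc α (SysSt δ Acc α))

/-- Admissibility of an output function for the stable game: for every non-accepting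
`s ∈ W` and every `X`, the value `Y = ω(s, X)` satisfies
`(X ⊭ α ∨ δ(s,X∪Y) ∈ Sys_st ∪ Acc) ∧ δ(s,X∪Y) ∈ W ∪ Acc`. -/
def AdmissibleStable {Vx Vy S : Type} (δ : S → Set (Vx ⊕ Vy) → S) (Acc : Set S)
    (α : BForm Vx) (ω : S → Set Vx → Set Vy) : Prop :=
  ∀ s ∈ Wst δ Acc α, s ∉ Acc → ∀ X : Set Vx,
    (¬ α.eval X ∨ stepWith δ ω s X ∈ SysSt δ Acc α ∪ Acc) ∧
      stepWith δ ω s X ∈ Wst δ Acc α ∪ Acc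

/-! ### Realizability notions -/

/-- The infinite combined trace induced by environment sequence `lam` and agent
strategy `g`: position `i` carries `X_i ∪ g(X₀,…,X_i)`. -/
def inducedTrace {Vx Vy : Type} (g : List (Set Vx) → Set Vy) (lam : ℕ → Set Vx)
    (i : ℕ) : Set (Vx ⊕ Vy) :=
  combine (lam i) (g (histList lam (i + 1)))

/-- The finite trace `ρ^k = (X₀ ∪ g(X₀)), …, (X_k ∪ g(X₀,…,X_k))`. -/
def finPrefix {Vx Vy : Type} (g : List (Set Vx) → Set Vy) (lam : ℕ → Set Vx)
    (k : ℕ) : List (Set (Vx ⊕ Vy)) :=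
  (List.range (k + 1)).map (inducedTrace g lam)

/-- `φ` is `α`-fair realizable. -/
def fairRealizable {Vx Vy : Type} (α : BForm Vx) (φ : Formula (Vx ⊕ Vy)) : Prop :=
  ∃ g : List (Set Vx) → Set Vy, ∀ lam : ℕ → Set Vx,
    fairSeq α lam → ∃ k, Formula.finSat (finPrefix g lam k) φ

/-- `φ` is `α`-stable realizable. -/
def stableRealizable {Vx Vy : Type} (α : BForm Vx) (φ : Formula (Vx ⊕ Vy)) : Prop :=
  ∃ g : List (Set Vx) → Set Vy, ∀ lam : ℕ → Set Vx,
    stableSeq α lam → ∃ k, Formula.finSat (finPrefix g lam k) φ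

/-- `φ` is realizable under the LTL environment assumption `ψA`. -/
def realizableUnder {Vx Vy : Type} (ψA φ : Formula (Vx ⊕ Vy)) : Prop :=
  ∃ g : List (Set Vx) → Set Vy, ∀ lam : ℕ → Set Vx,
    Formula.infSat (inducedTrace g lam) ψA → ∃ k, Formula.finSat (finPrefix g lam k) φ

/-- Combine `X ⊆ Vx` with an agent assignment over `Y ∪ {alive}` (modeled as
`Option Vy`, with `alive = none`) into an assignment over `X ∪ Y ∪ {alive}`. -/
def combineA {Vx Vy : Type} (X : Set Vx) (Y' : Set (Option Vy)) :
    Set (Option (Vx ⊕ Vy)) :=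
  {v | match v with
       | none => none ∈ Y'
       | some (Sum.inl x) => x ∈ X
       | some (Sum.inr y) => some y ∈ Y'}

/-- LTL realizability of `ψ` over `X ∪ Y ∪ {alive}` w.r.t. `⟨X, Y ∪ {alive}⟩`,
where `alive` is controlled by the agent. -/
def ltlRealizable {Vx Vy : Type} (ψ : Formula (Option (Vx ⊕ Vy))) : Prop :=
  ∃ f : List (Set Vx) → Set (Option Vy), ∀ lam : ℕ → Set Vx,
    Formula.infSat (fun i => combineA (lam i) (f (histList lam (i + 1)))) ψ

/-! ### Auxiliary lemmas for Statement 11 -/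

section Aux11

open Formula

lemma getD_range_map {A : Type} (f : ℕ → A) (d : A) {n i : ℕ} (hi : i < n) :
    ((List.range n).map f).getD i d = f i := by
  rw [List.getD_eq_getElem _ _ (by simpa)]
  simp

lemma infSatAt_F {P : Type} (τ : ℕ → Set P) (β : Formula P) (i : ℕ) :
    infSatAt τ (F β) i ↔ ∃ j, i ≤ j ∧ infSatAt τ β j := by
  simp [Formula.F, infSatAt]

lemma infSatAt_G {P : Type} (τ : ℕ → Set P) (β : Formula P) (i : ℕ) :
    infSatAt τ (G β) i ↔ ∀ j, i ≤ j → infSatAt τ β j := by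
  simp [Formula.G, Formula.F, infSatAt]

lemma infSatAt_imp {P : Type} (τ : ℕ → Set P) (A B : Formula P) (i : ℕ) :
    infSatAt τ (Formula.imp A B) i ↔ (infSatAt τ A i → infSatAt τ B i) := by
  simp only [Formula.imp, Formula.or, infSatAt]
  tauto

lemma infSatAt_toFormula {V P : Type} (emb : V → P) (b : BForm V) (τ : ℕ → Set P) (i : ℕ) :
    infSatAt τ (b.toFormula emb) i ↔ b.eval {v | emb v ∈ τ i} := by
  induction b with
  | tt => simp [BForm.toFormula, BForm.eval, infSatAt]
  | atom v => simp [BForm.toFormula, BForm.eval, infSatAt]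
  | not b ih => simp [BForm.toFormula, BForm.eval, infSatAt, ih]
  | and b c ihb ihc => simp [BForm.toFormula, BForm.eval, infSatAt, ihb, ihc]

lemma fairSeq_iff_infSat {Vx Vy : Type} (α : BForm Vx) (lam : ℕ → Set Vx)
    (Y : ℕ → Set (Option Vy)) :
    Formula.infSat (fun i => combineA (lam i) (Y i))
        (Formula.G (Formula.F (α.toFormula (fun x => some (Sum.inl x))))) ↔ fairSeq α lam := by
  rw [Formula.infSat, infSatAt_G]
  simp only [infSatAt_F, infSatAt_toFormula]
  have hset : ∀ i, {v : Vx | (some (Sum.inl v) : Option (Vx ⊕ Vy)) ∈ combineA (lam i) (Y i)}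
      = lam i := fun i => rfl
  simp only [hset, fairSeq]
  exact ⟨fun h n => h n (Nat.zero_le _), fun h n _ => h n⟩

/-- The key translation lemma: if `alive` holds on `τ` exactly on positions `≤ k`,
then `t φ` holds at `i ≤ k` iff `φ` holds (as an LTLf formula) at `i` of the
restricted finite trace of length `k + 1`. -/
lemma t_correct {P : Type} (τ : ℕ → Set (Option P)) (k : ℕ)
    (h : ∀ i, none ∈ τ i ↔ i ≤ k) (φ : Formula P) :
    ∀ i, i ≤ k → (infSatAt τ (t φ) i ↔
      finSatAt ((List.range (k+1)).map (fun j => {p | some p ∈ τ j})) φ i) := by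
  induction φ with
  | tt => intro i hi; simp [t, infSatAt, finSatAt]
  | atom a =>
      intro i hi
      simp only [t, infSatAt, finSatAt]
      rw [getD_range_map _ _ (by omega)]
      exact Iff.rfl
  | not φ ih => intro i hi; simp only [t, infSatAt, finSatAt, ih i hi]
  | and φ ψ ihφ ihψ =>
      intro i hi; simp only [t, infSatAt, finSatAt, ihφ i hi, ihψ i hi]
  | next φ ih =>
      intro i hi
      simp only [t, infSatAt, finSatAt, alive, List.length_map, List.length_range]
      constructor
      · rintro ⟨ha, hφ⟩
        have hik : i + 1 ≤ k := (h _).1 ha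
        exact ⟨by omega, (ih _ hik).1 hφ⟩
      · rintro ⟨hlen, hφ⟩
        have hik : i + 1 ≤ k := by omega
        exact ⟨(h _).2 hik, (ih _ hik).2 hφ⟩
  | until_ φ ψ ihφ ihψ =>
      intro i hi
      simp only [t, infSatAt, finSatAt, alive, List.length_map, List.length_range]
      constructor
      · rintro ⟨j, hij, ⟨ha, hψ'⟩, hall⟩
        have hjk : j ≤ k := (h _).1 ha
        exact ⟨j, hij, by omega, (ihψ _ hjk).1 hψ',
          fun m him hmj => (ihφ _ (by omega)).1 (hall m him hmj)⟩
      · rintro ⟨j, hij, hjk, hψ', hall⟩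
        have hjk' : j ≤ k := by omega
        exact ⟨j, hij, ⟨(h _).2 hjk', (ihψ _ hjk').2 hψ'⟩,
          fun m him hmj => (ihφ _ (by omega)).2 (hall m him hmj)⟩

/-- The finite trace induced by a finite environment history `l` and agent strategy `g`. -/
def prefTrace {Vx Vy : Type} (g : List (Set Vx) → Set Vy) (l : List (Set Vx)) :
    List (Set (Vx ⊕ Vy)) :=
  (List.range l.length).map (fun i => combine (l.getD i ∅) (g (l.take (i+1))))

lemma histList_take {A : Type} (lam : ℕ → A) (m n : ℕ) (h : n ≤ m) :
    (histList lam m).take n = histList lam n := by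
  unfold histList
  rw [← List.map_take, List.take_range]
  rw [Nat.min_eq_left h]

lemma prefTrace_hist {Vx Vy : Type} (g : List (Set Vx) → Set Vy) (lam : ℕ → Set Vx) (k : ℕ) :
    prefTrace g (histList lam (k+1)) = finPrefix g lam k := by
  unfold prefTrace finPrefix histList
  rw [List.length_map, List.length_range]
  apply List.map_congr_left
  intro i hi
  rw [List.mem_range] at hi
  have h1 : ((List.range (k+1)).map lam).getD i ∅ = lam i := getD_range_map _ _ hi
  have h2 : ((List.range (k+1)).map lam).take (i+1) = (List.range (i+1)).map lam := by
    rw [← List.map_take, List.take_range]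
    rw [Nat.min_eq_left (by omega : i + 1 ≤ k + 1)]
  rw [h1, h2]
  rfl

lemma someMem_combineA {Vx Vy : Type} (X : Set Vx) (Y' : Set (Option Vy)) :
    {p : Vx ⊕ Vy | some p ∈ combineA X Y'} = combine X {y | some y ∈ Y'} := by
  ext p
  cases p with
  | inl x => simp [combineA, combine, Set.mem_setOf_eq]
  | inr y => simp [combineA, combine, Set.mem_setOf_eq]

end Aux11

end LTLfSynth
open LTLfSynth in
/-- `φ` is `α`-fair realizable w.r.t. `⟨X, Y⟩` iff the LTL formula
`GFα → ψ` is realizable w.r.t. `⟨X, Y ∪ {alive}⟩`, where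
`ψ = t(φ) ∧ alive ∧ (alive U G ¬alive)`. -/
theorem fair_realizable_iff_ltl_realizable {Vx Vy : Type} [Fintype Vx] [Fintype Vy]
    (α : BForm Vx) (φ : Formula (Vx ⊕ Vy)) :
    fairRealizable α φ ↔
      ltlRealizable (Vx := Vx) (Vy := Vy)
        (Formula.imp (Formula.G (Formula.F (α.toFormula (fun x => some (Sum.inl x)))))
          (transLTL φ)) := by
  constructor
  · -- fair realizable → LTL realizable
    rintro ⟨g, hg⟩
    classical
    set f : List (Set Vx) → Set (Option Vy) := fun l =>
      {o | (∃ y, o = some y ∧ y ∈ g l) ∨ (o = none ∧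
        ¬ ∃ kk, kk + 2 ≤ l.length ∧ Formula.finSat (prefTrace g (l.take (kk+1))) φ)} with hfdef
    refine ⟨f, ?_⟩
    intro lam
    rw [Formula.infSat, infSatAt_imp]
    intro hGF
    have hfair : fairSeq α lam := (fairSeq_iff_infSat α lam _).1 hGF
    have hex : ∃ k, Formula.finSat (finPrefix g lam k) φ := hg lam hfair
    set τ : ℕ → Set (Option (Vx ⊕ Vy)) :=
      fun i => combineA (lam i) (f (histList lam (i+1))) with hτ
    set k₀ := Nat.find hex with hk₀def
    have hk₀ : Formula.finSat (finPrefix g lam k₀) φ := Nat.find_spec hex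
    have hmin : ∀ m, m < k₀ → ¬ Formula.finSat (finPrefix g lam m) φ :=
      fun m hm => Nat.find_min hex hm
    have hlen : ∀ i : ℕ, (histList lam (i+1)).length = i + 1 := by
      intro i; simp [histList]
    have hAlive : ∀ i, none ∈ τ i ↔ i ≤ k₀ := by
      intro i
      have hmem : none ∈ τ i ↔ ¬ ∃ kk, kk + 2 ≤ (histList lam (i+1)).length ∧
          Formula.finSat (prefTrace g ((histList lam (i+1)).take (kk+1))) φ := by
        simp [hτ, hfdef, combineA, Set.mem_setOf_eq]
      rw [hmem]
      constructor
      · intro hno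
        by_contra hlt
        push_neg at hlt
        refine hno ⟨k₀, ?_, ?_⟩
        · rw [hlen]; omega
        · rw [histList_take lam (i+1) (k₀+1) (by omega), prefTrace_hist]
          exact hk₀
      · rintro hle ⟨kk, hkk, hsat⟩
        rw [hlen] at hkk
        rw [histList_take lam (i+1) (kk+1) (by omega), prefTrace_hist] at hsat
        exact hmin kk (by omega) hsat
    have hB : ∀ i, {p : Vx ⊕ Vy | some p ∈ τ i} = inducedTrace g lam i := by
      intro i
      rw [hτ, someMem_combineA]
      have : {y | some y ∈ f (histList lam (i+1))} = g (histList lam (i+1)) := by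
        ext y; simp [hfdef, Set.mem_setOf_eq]
      rw [this]
      rfl
    have hC : ((List.range (k₀+1)).map (fun j => {p : Vx ⊕ Vy | some p ∈ τ j}))
        = finPrefix g lam k₀ := by
      unfold finPrefix
      exact List.map_congr_left (fun i _ => hB i)
    show Formula.infSatAt τ (transLTL φ) 0
    simp only [transLTL, Formula.infSatAt, alive]
    refine ⟨?_, ?_, k₀ + 1, Nat.zero_le _, ?_, ?_⟩
    · refine (t_correct τ k₀ hAlive φ 0 (Nat.zero_le _)).2 ?_
      rw [hC]
      exact hk₀
    · exact (hAlive 0).2 (Nat.zero_le _)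
    · rintro ⟨j2, hj2, hmem, -⟩
      simp only [Formula.infSatAt, not_not, hAlive] at hmem
      omega
    · intro kk _ hkk
      exact (hAlive kk).2 (by omega)
  · -- LTL realizable → fair realizable
    rintro ⟨f, hf⟩
    set g : List (Set Vx) → Set Vy := fun l => {y | some y ∈ f l} with hgdef
    refine ⟨g, ?_⟩
    intro lam hfair
    have h := hf lam
    rw [Formula.infSat, infSatAt_imp] at h
    have hψ := h ((fairSeq_iff_infSat α lam _).2 hfair)
    set τ : ℕ → Set (Option (Vx ⊕ Vy)) :=
      fun i => combineA (lam i) (f (histList lam (i+1))) with hτ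
    simp only [transLTL, Formula.infSatAt, alive] at hψ
    obtain ⟨ht, h0, j, -, hG, hpre⟩ := hψ
    have hG' : ∀ j', j ≤ j' → none ∉ τ j' := fun j' hj' hmem =>
      hG ⟨j', hj', not_not_intro hmem, fun _ _ _ => trivial⟩
    have hj1 : 1 ≤ j := by
      by_contra hc
      push_neg at hc
      exact hG' 0 (by omega) h0
    obtain ⟨k₀, rfl⟩ : ∃ k₀, j = k₀ + 1 := ⟨j - 1, by omega⟩
    have hAlive : ∀ i, none ∈ τ i ↔ i ≤ k₀ := by
      intro i
      constructor
      · intro hi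
        by_contra hc
        exact hG' i (by omega) hi
      · intro hi
        exact hpre i (Nat.zero_le _) (by omega)
    have hsat := (t_correct τ k₀ hAlive φ 0 (Nat.zero_le _)).1 ht
    have hC : ((List.range (k₀+1)).map (fun i => {p : Vx ⊕ Vy | some p ∈ τ i}))
        = finPrefix g lam k₀ := by
      unfold finPrefix
      refine List.map_congr_left (fun i _ => ?_)
      rw [hτ, someMem_combineA]
      rfl
    rw [hC] at hsat
    exact ⟨k₀, hsat⟩
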